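/- The number of histoires d'Hermite of size n (Dyck paths of size n with each up-step U_i ending at height y_i labeled by an integer in {1,…,y_i}) equals (2n−1)!! for all n ≥ 1. -/

import Mathlib

/-- The prefix of a path ending at the `(i+1)`-th up-step (`0`-based index `i`). -/
def upTo : List Bool → ℕ → List Bool
  | [], _ => []
  | true :: _, 0 => [true]
  | true :: rest, i + 1 => true :: upTo rest i
  | false :: rest, i => false :: upTo rest i

/-- The ordinate `y_i` of the endpoint of the `(i+1)`-th up-step (`0`-based index `i`). -/
def upHeight (p : List Bool) (i : ℕ) : ℕ :=
  (upTo p i).count true - (upTo p i).count false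

/-- A Dyck path of size `n`: `n` up-steps (`true`) and `n` down-steps (`false`),
never passing below the x-axis. -/
def IsDyckPath (n : ℕ) (p : List Bool) : Prop :=
  p.length = 2 * n ∧ p.count true = n ∧
    ∀ q : List Bool, q <+: p → q.count false ≤ q.count true

/-- A path is indecomposable when it touches the x-axis only at its endpoints. -/
def IsIndecomposable (p : List Bool) : Prop :=
  ∀ q : List Bool, q <+: p → q ≠ [] → q ≠ p → q.count false < q.count true

/-- The set `D_n`: Dyck paths of size `n` whose `i`-th up-step carries a label in `[1, y_i + 1]`. -/
def Dset (n : ℕ) : Set (List Bool × (Fin n → ℕ)) :=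
  {pl | IsDyckPath n pl.1 ∧ ∀ i : Fin n, 1 ≤ pl.2 i ∧ pl.2 i ≤ upHeight pl.1 i + 1}

/-- Histoires d'Hermite of size `n`: Dyck paths of size `n` whose `i`-th up-step
carries a label in `[1, y_i]`. -/
def Hset (n : ℕ) : Set (List Bool × (Fin n → ℕ)) :=
  {pl | IsDyckPath n pl.1 ∧ ∀ i : Fin n, 1 ≤ pl.2 i ∧ pl.2 i ≤ upHeight pl.1 i}

/-- Indecomposable histoires d'Hermite of size `n`. -/
def HindSet (n : ℕ) : Set (List Bool × (Fin n → ℕ)) :=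
  {pl | pl ∈ Hset n ∧ IsIndecomposable pl.1}

/-! ### Auxiliary development -/

/-- Labeled paths of length `m` from height `h` down to height `0`, staying nonnegative,
encoded as lists of naturals: entry `0` is a down-step, entry `v ≥ 1` is an up-step
carrying label `v`, which must be at most the height after this up-step. -/
def hf : ℕ → ℕ → Finset (List ℕ)
  | 0, 0 => {[]}
  | 0, _+1 => ∅
  | m+1, 0 => ((Finset.Icc 1 1) ×ˢ hf m 1).image (fun x => x.1 :: x.2)
  | m+1, h+1 => ((Finset.Icc 1 (h+2)) ×ˢ hf m (h+2)).image (fun x => x.1 :: x.2)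
      ∪ (hf m h).image (fun t => 0 :: t)

lemma mem_hf_succ {m h : ℕ} {l : List ℕ} :
    l ∈ hf (m+1) h ↔ (∃ v t, l = v :: t ∧ 1 ≤ v ∧ v ≤ h+1 ∧ t ∈ hf m (h+1)) ∨
      (∃ t h', h = h' + 1 ∧ l = 0 :: t ∧ t ∈ hf m h') := by
  cases h with
  | zero =>
    simp only [hf, Finset.mem_image, Finset.mem_product, Finset.mem_Icc]
    constructor
    · rintro ⟨⟨v, t⟩, ⟨⟨h1, h2⟩, h3⟩, rfl⟩
      exact Or.inl ⟨v, t, rfl, h1, h2, h3⟩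
    · rintro (⟨v, t, rfl, h1, h2, h3⟩ | ⟨t, h', h0, _⟩)
      · exact ⟨⟨v, t⟩, ⟨⟨h1, h2⟩, h3⟩, rfl⟩
      · omega
  | succ k =>
    simp only [hf, Finset.mem_union, Finset.mem_image, Finset.mem_product, Finset.mem_Icc]
    constructor
    · rintro (⟨⟨v, t⟩, ⟨⟨h1, h2⟩, h3⟩, rfl⟩ | ⟨t, h3, rfl⟩)
      · exact Or.inl ⟨v, t, rfl, h1, h2, h3⟩
      · exact Or.inr ⟨t, k, rfl, rfl, h3⟩
    · rintro (⟨v, t, rfl, h1, h2, h3⟩ | ⟨t, h', he, rfl, h3⟩)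
      · exact Or.inl ⟨⟨v, t⟩, ⟨⟨h1, h2⟩, h3⟩, rfl⟩
      · cases he; exact Or.inr ⟨t, h3, rfl⟩

lemma card_hf_succ (m h : ℕ) :
    (hf (m+1) h).card = (h+1) * (hf m (h+1)).card +
      (match h with | 0 => 0 | h'+1 => (hf m h').card) := by
  have hinj : Function.Injective (fun x : ℕ × List ℕ => x.1 :: x.2) := by
    rintro ⟨a, b⟩ ⟨c, d⟩ he
    simp only [List.cons.injEq] at he
    simp [he.1, he.2]
  have hinj2 : Function.Injective (fun t : List ℕ => 0 :: t) := by
    intro a b he; simpa using he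
  cases h with
  | zero =>
    rw [hf, Finset.card_image_of_injective _ hinj, Finset.card_product, Nat.card_Icc]
    norm_num
  | succ k =>
    have hdisj : Disjoint (((Finset.Icc 1 (k+2)) ×ˢ hf m (k+2)).image
        (fun x : ℕ × List ℕ => x.1 :: x.2)) ((hf m k).image (fun t => 0 :: t)) := by
      rw [Finset.disjoint_left]
      rintro l hl hr
      simp only [Finset.mem_image, Finset.mem_product, Finset.mem_Icc] at hl hr
      obtain ⟨⟨v, t⟩, ⟨⟨h1, _⟩, _⟩, rfl⟩ := hl
      obtain ⟨t', _, he⟩ := hr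
      simp only [List.cons.injEq] at he
      omega
    rw [hf, Finset.card_union_of_disjoint hdisj, Finset.card_image_of_injective _ hinj,
      Finset.card_image_of_injective _ hinj2, Finset.card_product, Nat.card_Icc]
    norm_num

lemma hf_eq_empty : ∀ m h : ℕ, m < h → hf m h = ∅ := by
  intro m
  induction m with
  | zero => intro h hh; match h, hh with | h+1, _ => rfl
  | succ m ih =>
    intro h hh
    match h, hh with
    | h+1, hh =>
      rw [hf, ih (h+2) (by omega), ih h (by omega)]
      simp

lemma card_hf_self : ∀ h : ℕ, (hf h h).card = 1 := by
  intro h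
  induction h with
  | zero => rfl
  | succ h ih =>
    rw [card_hf_succ, hf_eq_empty h (h+2) (by omega)]
    simpa using ih

set_option linter.unusedVariables false in
theorem hf_card_mul : ∀ k h : ℕ,
    (hf (h + 2*k) h).card * (2^k * k.factorial * h.factorial) = (h + 2*k).factorial := by
  intro k
  induction k with
  | zero =>
    intro h
    simpa [card_hf_self h] using rfl
  | succ k ihk =>
    intro h
    induction h with
    | zero =>
      have h1 : 0 + 2*(k+1) = (1 + 2*k) + 1 := by omega
      rw [h1, card_hf_succ]
      have step : ((0+1) * (hf (1+2*k) (0+1)).card + 0)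
          * (2^(k+1) * (k+1).factorial * Nat.factorial 0)
          = ((hf (1+2*k) 1).card * (2^k * k.factorial * Nat.factorial 1)) * (2*(k+1)) := by
        simp only [pow_succ, Nat.factorial_succ, Nat.factorial_zero, Nat.factorial_one]
        ring
      rw [step, ihk 1,
        show (1+2*k+1).factorial = (1+2*k).factorial * (1+2*k+1) from by
          rw [Nat.factorial_succ]; ring]
      ring
    | succ h ihh =>
      have h1 : (h+1) + 2*(k+1) = ((h+2) + 2*k) + 1 := by omega
      rw [h1, card_hf_succ]
      have e2 : h + 2 + 2*k = h + 2*(k+1) := by omega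
      have A := ihk (h+2)
      have B : (hf (h + 2 + 2*k) h).card * (2 ^ (k+1) * (k+1).factorial * h.factorial)
          = (h + 2*(k+1)).factorial := by rw [e2]; exact ihh
      have hfact : (h + 2 + 2*k + 1).factorial = (h+2+2*k).factorial * (h + 2*k + 3) := by
        rw [Nat.factorial_succ]; ring_nf
      rw [hfact]
      have lhs1 : (h+2) * (hf (h+2+2*k) (h+2)).card
          * (2 ^ (k+1) * (k+1).factorial * (h+1).factorial)
          = (h+2+2*k).factorial * (2*(k+1)) := by
        calc (h+2) * (hf (h+2+2*k) (h+2)).card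
            * (2 ^ (k+1) * (k+1).factorial * (h+1).factorial)
            = ((hf (h+2+2*k) (h+2)).card * (2^k * k.factorial * (h+2).factorial))
              * (2*(k+1)) := by
              simp only [pow_succ, Nat.factorial_succ]
              ring
          _ = (h+2+2*k).factorial * (2*(k+1)) := by rw [A]
      have lhs2 : (hf (h+2+2*k) h).card
          * (2 ^ (k+1) * (k+1).factorial * (h+1).factorial)
          = (h+2+2*k).factorial * (h+1) := by
        calc (hf (h+2+2*k) h).card * (2 ^ (k+1) * (k+1).factorial * (h+1).factorial)
            = ((hf (h+2+2*k) h).card * (2 ^ (k+1) * (k+1).factorial * h.factorial))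
              * (h+1) := by simp only [Nat.factorial_succ]; ring
          _ = (h + 2*(k+1)).factorial * (h+1) := by rw [B]
          _ = (h+2+2*k).factorial * (h+1) := by rw [show h + 2*(k+1) = h+2+2*k by omega]
      calc ((h+2) * (hf (h+2+2*k) (h+2)).card + (hf (h+2+2*k) h).card)
          * (2 ^ (k+1) * (k+1).factorial * (h+1).factorial)
          = (h+2) * (hf (h+2+2*k) (h+2)).card
            * (2 ^ (k+1) * (k+1).factorial * (h+1).factorial)
            + (hf (h+2+2*k) h).card * (2 ^ (k+1) * (k+1).factorial * (h+1).factorial) := by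
            ring
        _ = (h+2+2*k).factorial * (2*(k+1)) + (h+2+2*k).factorial * (h+1) := by
            rw [lhs1, lhs2]
        _ = (h+2+2*k).factorial * (h + 2*k + 3) := by ring

/-! ### Encoding histoires as lists of naturals -/

/-- Interleave a path with the list of labels of its up-steps. -/
def enc : List Bool → List ℕ → List ℕ
  | [], _ => []
  | true :: t, v :: vs => v :: enc t vs
  | true :: t, [] => 1 :: enc t []
  | false :: t, vs => 0 :: enc t vs

/-- The recursive validity predicate for a labeled path from height `h` down to `0`. -/
def W : ℕ → List Bool → List ℕ → Prop
  | h, [], vs => h = 0 ∧ vs = []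
  | h, true :: t, vs => ∃ v vs', vs = v :: vs' ∧ 1 ≤ v ∧ v ≤ h + 1 ∧ W (h+1) t vs'
  | h, false :: t, vs => ∃ h', h = h' + 1 ∧ W h' t vs

lemma enc_length : ∀ (p : List Bool) (vs : List ℕ), (enc p vs).length = p.length := by
  intro p
  induction p with
  | nil => intro vs; rfl
  | cons b t ih =>
    intro vs
    cases b with
    | true => cases vs with
      | nil => simpa [enc] using ih []
      | cons v vs => simpa [enc] using ih vs
    | false => simpa [enc] using ih vs

lemma W_mem_hf : ∀ (p : List Bool) (vs : List ℕ) (h : ℕ),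
    W h p vs → enc p vs ∈ hf p.length h := by
  intro p
  induction p with
  | nil =>
    rintro vs h ⟨rfl, rfl⟩
    simp [enc, hf]
  | cons b t ih =>
    intro vs h hw
    cases b with
    | true =>
      obtain ⟨v, vs', rfl, h1, h2, h3⟩ := hw
      rw [List.length_cons]
      exact mem_hf_succ.2 (Or.inl ⟨v, enc t vs', rfl, h1, h2, ih vs' (h+1) h3⟩)
    | false =>
      obtain ⟨h', rfl, h3⟩ := hw
      rw [List.length_cons]
      exact mem_hf_succ.2 (Or.inr ⟨enc t vs, h', rfl, rfl, ih vs h' h3⟩)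

lemma mem_hf_exists : ∀ (m h : ℕ) (l : List ℕ), l ∈ hf m h →
    ∃ p vs, l = enc p vs ∧ W h p vs ∧ p.length = m := by
  intro m
  induction m with
  | zero =>
    intro h l hl
    cases h with
    | zero =>
      simp only [hf, Finset.mem_singleton] at hl
      exact ⟨[], [], by simp [hl, enc], ⟨rfl, rfl⟩, rfl⟩
    | succ k => simp [hf] at hl
  | succ m ih =>
    intro h l hl
    rcases mem_hf_succ.1 hl with ⟨v, t, rfl, h1, h2, h3⟩ | ⟨t, h', rfl, rfl, h3⟩
    · obtain ⟨p, vs, rfl, hw, hlen⟩ := ih (h+1) t h3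
      refine ⟨true :: p, v :: vs, rfl, ⟨v, vs, rfl, h1, h2, hw⟩, by simp [hlen]⟩
    · obtain ⟨p, vs, rfl, hw, hlen⟩ := ih h' t h3
      refine ⟨false :: p, vs, rfl, ⟨h', rfl, hw⟩, by simp [hlen]⟩


lemma ct_true (t : List Bool) : (true :: t).count true = t.count true + 1 := by simp
lemma cf_true (t : List Bool) : (true :: t).count false = t.count false := by simp
lemma ct_false (t : List Bool) : (false :: t).count true = t.count true := by simp
lemma cf_false (t : List Bool) : (false :: t).count false = t.count false + 1 := by simp
lemma getD_zero (v : ℕ) (vs : List ℕ) : (v :: vs).getD 0 0 = v := rfl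
lemma getD_succ (v i : ℕ) (vs : List ℕ) : (v :: vs).getD (i+1) 0 = vs.getD i 0 := rfl

lemma prefix_cons_cases {b : Bool} {t q : List Bool} (h : q <+: b :: t) :
    q = [] ∨ ∃ q', q = b :: q' ∧ q' <+: t := by
  rcases h with ⟨r, hr⟩
  cases q with
  | nil => exact Or.inl rfl
  | cons a q' =>
    simp only [List.cons_append, List.cons.injEq] at hr
    exact Or.inr ⟨q', by rw [hr.1], ⟨r, hr.2⟩⟩

lemma W_iff : ∀ (p : List Bool) (h : ℕ) (vs : List ℕ),
    W h p vs ↔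
      vs.length = p.count true ∧
      p.count false = p.count true + h ∧
      (∀ q, q <+: p → q.count false ≤ q.count true + h) ∧
      (∀ i, i < vs.length → 1 ≤ vs.getD i 0 ∧
        vs.getD i 0 + (upTo p i).count false ≤ h + (upTo p i).count true) := by
  intro p
  induction p with
  | nil =>
    intro h vs
    constructor
    · rintro ⟨rfl, rfl⟩
      refine ⟨rfl, rfl, ?_, by simp⟩
      intro q hq
      rw [List.prefix_nil.1 hq]
      simp
    · rintro ⟨c1, c2, -, -⟩
      simp only [List.count_nil] at c1 c2
      exact ⟨by omega, List.length_eq_zero_iff.1 c1⟩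
  | cons b t ih =>
    intro h vs
    cases b with
    | true =>
      constructor
      · rintro ⟨v, vs', rfl, h1, h2, hw⟩
        obtain ⟨c1, c2, c3, c4⟩ := (ih (h+1) vs').1 hw
        refine ⟨by rw [List.length_cons, ct_true, c1], by rw [ct_true, cf_true]; omega, ?_, ?_⟩
        · intro q hq
          rcases prefix_cons_cases hq with rfl | ⟨q', rfl, hq'⟩
          · simp
          · have := c3 q' hq'
            rw [ct_true, cf_true]
            omega
        · intro i hi
          cases i with
          | zero =>
            rw [getD_zero]
            refine ⟨h1, ?_⟩
            show v + ([true] : List Bool).count false ≤ h + ([true] : List Bool).count true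
            simp only [List.count_singleton]
            norm_num
            omega
          | succ i =>
            have hi' : i < vs'.length := by simpa using hi
            have := c4 i hi'
            rw [getD_succ,
              show upTo (true :: t) (i+1) = true :: upTo t i from rfl,
              ct_true, cf_true]
            omega
      · rintro ⟨c1, c2, c3, c4⟩
        cases vs with
        | nil => rw [List.length_nil, ct_true] at c1; omega
        | cons v vs' =>
          have h0 := c4 0 (by simp)
          rw [getD_zero] at h0
          have hv1 : 1 ≤ v := h0.1
          have hv2 : v ≤ h + 1 := by
            have h02 := h0.2
            have : upTo (true :: t) 0 = [true] := rfl
            rw [this] at h02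
            simpa using h02
          rw [List.length_cons, ct_true] at c1
          rw [ct_true, cf_true] at c2
          refine ⟨v, vs', rfl, hv1, hv2, (ih (h+1) vs').2 ⟨by omega, by omega, ?_, ?_⟩⟩
          · intro q hq
            have := c3 (true :: q) (List.cons_prefix_cons.2 ⟨rfl, hq⟩)
            rw [ct_true, cf_true] at this
            omega
          · intro i hi
            have := c4 (i+1) (by simpa using hi)
            rw [getD_succ,
              show upTo (true :: t) (i+1) = true :: upTo t i from rfl,
              ct_true, cf_true] at this
            exact ⟨this.1, by omega⟩
    | false =>
      constructor
      · rintro ⟨h', rfl, hw⟩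
        obtain ⟨c1, c2, c3, c4⟩ := (ih h' vs).1 hw
        refine ⟨by rw [ct_false]; exact c1, by rw [ct_false, cf_false]; omega, ?_, ?_⟩
        · intro q hq
          rcases prefix_cons_cases hq with rfl | ⟨q', rfl, hq'⟩
          · simp
          · have := c3 q' hq'
            rw [ct_false, cf_false]
            omega
        · intro i hi
          have := c4 i hi
          rw [show upTo (false :: t) i = false :: upTo t i from rfl, ct_false, cf_false]
          exact ⟨this.1, by omega⟩
      · rintro ⟨c1, c2, c3, c4⟩
        have hpos : 1 ≤ h := by
          have := c3 [false] ⟨t, rfl⟩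
          simpa using this
        obtain ⟨h', rfl⟩ : ∃ h', h = h' + 1 := ⟨h - 1, by omega⟩
        rw [ct_false] at c1
        rw [ct_false, cf_false] at c2
        refine ⟨h', rfl, (ih h' vs).2 ⟨c1, by omega, ?_, ?_⟩⟩
        · intro q hq
          have := c3 (false :: q) (List.cons_prefix_cons.2 ⟨rfl, hq⟩)
          rw [ct_false, cf_false] at this
          omega
        · intro i hi
          have := c4 i hi
          rw [show upTo (false :: t) i = false :: upTo t i from rfl,
            ct_false, cf_false] at this
          exact ⟨this.1, by omega⟩


lemma upTo_prefix : ∀ (p : List Bool) (i : ℕ), upTo p i <+: p := by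
  intro p
  induction p with
  | nil => intro i; simp [upTo]
  | cons b t ih =>
    intro i
    cases b with
    | true =>
      cases i with
      | zero => exact List.cons_prefix_cons.2 ⟨rfl, List.nil_prefix⟩
      | succ i => exact List.cons_prefix_cons.2 ⟨rfl, ih i⟩
    | false => exact List.cons_prefix_cons.2 ⟨rfl, ih i⟩

lemma count_tf : ∀ p : List Bool, p.count true + p.count false = p.length := by
  intro p
  induction p with
  | nil => rfl
  | cons b t ih =>
    cases b with
    | true => rw [ct_true, cf_true, List.length_cons]; omega
    | false => rw [ct_false, cf_false, List.length_cons]; omega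

lemma dec_path : ∀ (p : List Bool) (vs : List ℕ), (∀ v ∈ vs, v ≠ 0) →
    (enc p vs).map (fun v => v != 0) = p := by
  intro p
  induction p with
  | nil => intro vs _; rfl
  | cons b t ih =>
    intro vs hvs
    cases b with
    | true =>
      cases vs with
      | nil => simpa [enc] using ih [] (by simp)
      | cons v vs =>
        have hv : v ≠ 0 := hvs v (by simp)
        simp only [enc, List.map_cons]
        rw [ih vs (fun w hw => hvs w (by simp [hw]))]
        simp [hv]
    | false =>
      simp only [enc, List.map_cons]
      rw [ih vs hvs]
      simp

lemma dec_labels : ∀ (p : List Bool) (vs : List ℕ), vs.length = p.count true →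
    (∀ v ∈ vs, v ≠ 0) → (enc p vs).filter (fun v => v != 0) = vs := by
  intro p
  induction p with
  | nil =>
    intro vs hlen _
    simp only [List.count_nil] at hlen
    rw [List.length_eq_zero_iff.1 hlen]
    rfl
  | cons b t ih =>
    intro vs hlen hvs
    cases b with
    | true =>
      rw [ct_true] at hlen
      cases vs with
      | nil => simp at hlen
      | cons v vs =>
        have hv : v ≠ 0 := hvs v (by simp)
        simp only [enc, List.filter_cons]
        rw [if_pos (by simpa using hv), ih vs (by simpa using hlen)
          (fun w hw => hvs w (by simp [hw]))]
    | false =>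
      rw [ct_false] at hlen
      simp only [enc, List.filter_cons]
      rw [if_neg (by simp), ih vs hlen hvs]

lemma Hset_iff (n : ℕ) (p : List Bool) (f : Fin n → ℕ) :
    (p, f) ∈ Hset n ↔ p.length = 2 * n ∧ W 0 p (List.ofFn f) := by
  constructor
  · rintro ⟨⟨hlen, hct, hpre⟩, hlab⟩
    dsimp only at hlen hct hpre hlab
    refine ⟨hlen, (W_iff p 0 (List.ofFn f)).2 ⟨by simp [hct], ?_, ?_, ?_⟩⟩
    · have h1 := count_tf p
      have h2 := hpre p (List.prefix_refl p)
      omega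
    · intro q hq; simpa using hpre q hq
    · intro i hi
      have hi' : i < n := by simpa using hi
      have hgd : (List.ofFn f).getD i 0 = f ⟨i, hi'⟩ := by
        rw [List.getD_eq_getElem _ 0 hi, List.getElem_ofFn]
      have hl := hlab ⟨i, hi'⟩
      have hcf : (upTo p i).count false ≤ (upTo p i).count true :=
        hpre (upTo p i) (upTo_prefix p i)
      have hub : f ⟨i, hi'⟩ ≤ upHeight p i := hl.2
      unfold upHeight at hub
      rw [hgd]
      exact ⟨hl.1, by omega⟩
  · rintro ⟨hlen, hw⟩
    obtain ⟨c1, c2, c3, c4⟩ := (W_iff p 0 (List.ofFn f)).1 hw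
    have hct : p.count true = n := by
      have h1 := count_tf p
      simp only [List.length_ofFn] at c1
      omega
    refine ⟨⟨hlen, hct, fun q hq => by simpa using c3 q hq⟩, fun i => ?_⟩
    dsimp only
    have hi : (i : ℕ) < (List.ofFn f).length := by simp [i.isLt]
    have h4 := c4 i hi
    have hgd : (List.ofFn f).getD i 0 = f i := by
      rw [List.getD_eq_getElem _ 0 hi, List.getElem_ofFn]
    rw [hgd] at h4
    refine ⟨h4.1, ?_⟩
    unfold upHeight
    omega


lemma ofFn_ne_zero {n : ℕ} {f : Fin n → ℕ} (hf1 : ∀ i, 1 ≤ f i) :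
    ∀ v ∈ List.ofFn f, v ≠ 0 := by
  intro v hv
  obtain ⟨i, rfl⟩ := List.mem_ofFn.1 hv
  have := hf1 i
  omega

lemma card_Hset (n : ℕ) : Nat.card (Hset n) = (hf (2*n) 0).card := by
  have F : ∀ x : Hset n, enc x.1.1 (List.ofFn x.1.2) ∈ hf (2*n) 0 := by
    rintro ⟨⟨p, f⟩, hx⟩
    obtain ⟨hlen, hw⟩ := (Hset_iff n p f).1 hx
    have := W_mem_hf p (List.ofFn f) 0 hw
    rwa [hlen] at this
  have hbij : Function.Bijective (fun x : Hset n =>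
      (⟨enc x.1.1 (List.ofFn x.1.2), F x⟩ : {l // l ∈ hf (2*n) 0})) := by
    constructor
    · rintro ⟨⟨p, f⟩, hx⟩ ⟨⟨p', f'⟩, hx'⟩ hab
      simp only [Subtype.mk.injEq] at hab
      have hv : ∀ v ∈ List.ofFn f, v ≠ 0 := ofFn_ne_zero (fun i => (hx.2 i).1)
      have hv' : ∀ v ∈ List.ofFn f', v ≠ 0 := ofFn_ne_zero (fun i => (hx'.2 i).1)
      have hpeq : p = p' := by
        rw [← dec_path p (List.ofFn f) hv, ← dec_path p' (List.ofFn f') hv', hab]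
      have hlf : (List.ofFn f).length = p.count true := by
        rw [List.length_ofFn, hx.1.2.1]
      have hlf' : (List.ofFn f').length = p'.count true := by
        rw [List.length_ofFn, hx'.1.2.1]
      have hfeq : f = f' := by
        have := dec_labels p (List.ofFn f) hlf hv
        have h2 := dec_labels p' (List.ofFn f') hlf' hv'
        rw [← hab] at h2
        exact List.ofFn_inj.1 (by rw [← this, ← h2])
      subst hpeq hfeq
      rfl
    · rintro ⟨l, hl⟩
      obtain ⟨p, vs, rfl, hw, hplen⟩ := mem_hf_exists (2*n) 0 l hl
      obtain ⟨c1, c2, -, -⟩ := (W_iff p 0 vs).1 hw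
      have hct : p.count true = n := by
        have := count_tf p
        omega
      have hofn : List.ofFn (fun i : Fin n => vs.getD i 0) = vs := by
        apply List.ext_getElem (by rw [List.length_ofFn, c1, hct])
        intro i h1 h2
        rw [List.getElem_ofFn]
        exact List.getD_eq_getElem vs 0 h2
      have hmem : (p, fun i : Fin n => vs.getD i 0) ∈ Hset n :=
        (Hset_iff n p _).2 ⟨hplen, by rw [hofn]; exact hw⟩
      exact ⟨⟨(p, fun i : Fin n => vs.getD i 0), hmem⟩, Subtype.ext (by simp only; rw [hofn])⟩
  rw [Nat.card_congr (Equiv.ofBijective _ hbij), Nat.card_eq_finsetCard]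


open Nat in
theorem card_Hset_eq_doubleFactorial :
    ∀ n : ℕ, 1 ≤ n → Nat.card (Hset n) = (2 * n - 1)‼ := by
  intro n hn
  rw [card_Hset n]
  have H := hf_card_mul n 0
  rw [Nat.zero_add, Nat.factorial_zero, mul_one] at H
  have hdf : (2*n).factorial = (2*n - 1)‼ * (2^n * n.factorial) := by
    have h2 : 2*n - 1 + 1 = 2*n := by omega
    have h3 := Nat.factorial_eq_mul_doubleFactorial (2*n-1)
    rw [h2, Nat.doubleFactorial_two_mul] at h3
    rw [h3]
    ring
  have hpos : 0 < 2^n * n.factorial := by positivity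
  apply Nat.eq_of_mul_eq_mul_right hpos
  rw [H, hdf]
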